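/- Let x₁ < x₂ < ⋯ < x_m be real numbers and let α ≥ 0, d ≥ α + 1 be integers with N = ⌈(d+1)/(d−α)⌉. If m ≥ N, then the (d+1) × (m(d−α)) matrix whose columns are the coefficient vectors of the polynomials x^p (x − x_t)^(α+1) (for 1 ≤ t ≤ m and 0 ≤ p ≤ d − α − 1) in the monomial basis 1, x, …, x^d has rank d + 1. -/
import Mathlib


open Polynomial

set_option maxRecDepth 8000

/-- Full row rank of the single-edge conformality matrix: for
`x₁ < ⋯ < x_m`, `0 ≤ α`, `d ≥ α + 1`, `N = ⌈(d+1)/(d−α)⌉` and `m ≥ N`, the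
`(d+1) × (m(d−α))` matrix whose columns are the coefficient vectors of the
polynomials `x^p (x − x_t)^(α+1)` (for `1 ≤ t ≤ m`, `0 ≤ p ≤ d−α−1`) in the
monomial basis `1, x, …, x^d` has rank `d + 1`. -/
theorem conformality_matrix_full_rank (d α m N : ℕ)
    (hd : α + 1 ≤ d)
    (hN : (N : ℤ) = ⌈((d : ℚ) + 1) / ((d : ℚ) - (α : ℚ))⌉)
    (x : Fin m → ℝ) (hx : StrictMono x) (hm : N ≤ m) :
    (Matrix.of fun (i : Fin (d + 1)) (c : Fin m × Fin (d - α)) =>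
        ((X ^ (c.2 : ℕ) * (X - C (x c.1)) ^ (α + 1) : ℝ[X]).coeff (i : ℕ))).rank
      = d + 1 := by
  set A : Matrix (Fin (d + 1)) (Fin m × Fin (d - α)) ℝ :=
    Matrix.of fun (i : Fin (d + 1)) (c : Fin m × Fin (d - α)) =>
        ((X ^ (c.2 : ℕ) * (X - C (x c.1)) ^ (α + 1) : ℝ[X]).coeff (i : ℕ)) with hAdef
  -- counting: d + 1 ≤ m * (d - α)
  have hαd : (α : ℚ) + 1 ≤ (d : ℚ) := by exact_mod_cast hd
  have hcount : d + 1 ≤ m * (d - α) := by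
    have h1 : ((d : ℚ) + 1) / ((d : ℚ) - (α : ℚ)) ≤ (N : ℚ) := by
      have h := Int.le_ceil (((d : ℚ) + 1) / ((d : ℚ) - (α : ℚ)))
      rw [← hN] at h
      exact_mod_cast h
    have hpos : (0 : ℚ) < (d : ℚ) - α := by linarith
    rw [div_le_iff₀ hpos] at h1
    have hmN : (N : ℚ) ≤ (m : ℚ) := by exact_mod_cast hm
    have h3 : ((d : ℚ) + 1) ≤ (m : ℚ) * ((d : ℚ) - α) := by nlinarith
    have hc : (d : ℚ) - (α : ℚ) = ((d - α : ℕ) : ℚ) := by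
      have hαd' : α ≤ d := le_trans (Nat.le_succ α) hd
      push_cast [Nat.cast_sub hαd']
      ring
    rw [hc] at h3
    exact_mod_cast h3
  have hdα : 0 < d - α := by omega
  -- injectivity of the transpose action
  have hinj : Function.Injective (A.transpose.mulVecLin) := by
    rw [← LinearMap.ker_eq_bot, LinearMap.ker_eq_bot']
    intro l hl
    -- the linear functional on polynomials
    set L : ℝ[X] →ₗ[ℝ] ℝ := ∑ i : Fin (d + 1), l i • (lcoeff ℝ (i : ℕ)) with hLdef
    have hLapp : ∀ f : ℝ[X], L f = ∑ i : Fin (d + 1), l i * f.coeff (i : ℕ) := by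
      intro f
      simp [hLdef, LinearMap.sum_apply, lcoeff_apply]
    have h0 : ∀ (t : Fin m) (p : ℕ), p < d - α →
        L (X ^ p * (X - C (x t)) ^ (α + 1)) = 0 := by
      intro t p hp
      have := congrFun hl (t, ⟨p, hp⟩)
      simp only [Matrix.mulVecLin_apply, Matrix.mulVec, dotProduct,
        Matrix.transpose_apply, Pi.zero_apply] at this
      rw [hLapp]
      rw [← this]
      apply Finset.sum_congr rfl
      intro i _
      rw [mul_comm]
      rfl
    -- vanishing on q * (X - x t)^(α+1) for deg q < d - α
    have hq : ∀ (t : Fin m) (q : ℝ[X]), q.natDegree < d - α →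
        L (q * (X - C (x t)) ^ (α + 1)) = 0 := by
      intro t q hqd
      conv_lhs => rw [q.as_sum_range' (d - α) hqd]
      rw [Finset.sum_mul, map_sum]
      refine Finset.sum_eq_zero fun k hk => ?_
      rw [Finset.mem_range] at hk
      have hmono : (monomial k (q.coeff k) : ℝ[X]) * (X - C (x t)) ^ (α + 1)
          = (q.coeff k) • (X ^ k * (X - C (x t)) ^ (α + 1)) := by
        rw [← C_mul_X_pow_eq_monomial, smul_eq_C_mul, mul_assoc]
      rw [hmono, map_smul, h0 t k hk, smul_zero]
    -- vanishing on (X - x t)^j for α+1 ≤ j ≤ d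
    have hpow : ∀ (t : Fin m) (j : ℕ), α + 1 ≤ j → j ≤ d →
        L ((X - C (x t)) ^ j) = 0 := by
      intro t j hj1 hj2
      have hj : j = (j - (α + 1)) + (α + 1) := by omega
      rw [hj, pow_add]
      exact hq t _ (by rw [natDegree_pow, natDegree_X_sub_C, mul_one]; omega)
    -- the polynomial family F a with (F a).eval u = L ((X - C u)^d)
    set F : ℝ → ℝ[X] := fun a =>
      ∑ j ∈ Finset.range (d + 1),
        C ((d.choose j : ℝ) * L ((X - C a) ^ j)) * (C a - X) ^ (d - j) with hFdef
    have hFeval : ∀ a u : ℝ, (F a).eval u = L ((X - C u) ^ d) := by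
      intro a u
      have hexp : ((X : ℝ[X]) - C u) ^ d
          = ∑ j ∈ Finset.range (d + 1),
              ((a - u) ^ (d - j) * (d.choose j : ℝ)) • ((X - C a) ^ j) := by
        have : ((X : ℝ[X]) - C u) = (X - C a) + C (a - u) := by
          rw [C_sub]; ring
        rw [this, add_pow]
        apply Finset.sum_congr rfl
        intro j _
        rw [smul_eq_C_mul, ← C_pow, C_mul]
        simp [Polynomial.C_eq_natCast]
        ring
      rw [hexp, map_sum]
      simp only [map_smul, smul_eq_mul]
      simp only [hFdef, eval_finset_sum, eval_mul, eval_pow, eval_C, eval_sub, eval_X]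
      apply Finset.sum_congr rfl
      intro j _
      ring
    have hFF : ∀ a : ℝ, F a = F 0 := by
      intro a
      apply Polynomial.funext
      intro u
      rw [hFeval, hFeval]
    set g : ℝ[X] := F 0 with hgdef
    -- divisibility at each node
    have hdvd : ∀ t : Fin m, (X - C (x t)) ^ (d - α) ∣ g := by
      intro t
      rw [← hFF (x t), hFdef]
      apply Finset.dvd_sum
      intro j hj
      rw [Finset.mem_range] at hj
      by_cases hjα : j ≤ α
      · have h1 : ((C (x t) : ℝ[X]) - X) ^ (d - j)
            = (-1) ^ (d - j) * (X - C (x t)) ^ (d - j) := by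
          rw [← neg_pow, neg_sub]
        rw [h1]
        have h2 : (X - C (x t)) ^ (d - α) ∣ (X - C (x t)) ^ (d - j) :=
          pow_dvd_pow _ (by omega)
        exact Dvd.dvd.mul_left (h2.mul_left _) _
      · rw [hpow t j (by omega) (by omega), mul_zero, map_zero, zero_mul]
        exact dvd_zero _
    -- product divides g
    have hprod : (∏ t : Fin m, (X - C (x t)) ^ (d - α)) ∣ g := by
      apply Finset.prod_dvd_of_coprime
      · intro a _ b _ hab
        exact ((pairwise_coprime_X_sub_C hx.injective) hab).pow
      · intro t _
        exact hdvd t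
    -- degree bound forces g = 0
    have hgdeg : g.natDegree ≤ d := by
      rw [hgdef, hFdef]
      apply natDegree_sum_le_of_forall_le
      intro j hj
      rw [Finset.mem_range] at hj
      calc (C ((d.choose j : ℝ) * L ((X - C (0:ℝ)) ^ j)) * (C (0:ℝ) - X) ^ (d - j)).natDegree
          ≤ _ + _ := natDegree_mul_le
        _ ≤ d := by
            rw [natDegree_C]
            have : ((C (0:ℝ) - X) ^ (d - j)).natDegree ≤ d - j := by
              apply le_trans (natDegree_pow_le)
              have : ((C (0:ℝ)) - X : ℝ[X]).natDegree ≤ 1 := by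
                apply le_trans (natDegree_sub_le _ _)
                simp
              calc (d-j) * ((C (0:ℝ)) - X : ℝ[X]).natDegree ≤ (d-j) * 1 :=
                    Nat.mul_le_mul_left _ this
                _ = d - j := by ring
            omega
    have hg0 : g = 0 := by
      by_contra hg
      have h1 := Polynomial.natDegree_le_of_dvd hprod hg
      have h2 : (∏ t : Fin m, (X - C (x t)) ^ (d - α)).natDegree = m * (d - α) := by
        rw [natDegree_prod]
        · simp [natDegree_pow, natDegree_X_sub_C, Finset.sum_const, Finset.card_univ]
        · intro t _
          exact pow_ne_zero _ (X_sub_C_ne_zero (x t))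
      rw [h2] at h1
      omega
    -- extract vanishing of L on monomials
    have hLX : ∀ j : ℕ, j ≤ d → L (X ^ j) = 0 := by
      intro j hj
      have hkey : ∀ k n : ℕ, ((-X : ℝ[X]) ^ k).coeff n
          = (-1 : ℝ) ^ k * (if n = k then 1 else 0) := by
        intro k n
        rw [show (-X : ℝ[X]) = C (-1) * X by simp, mul_pow, ← C_pow, coeff_C_mul,
          coeff_X_pow]
      have hco := congrArg (fun p => Polynomial.coeff p (d - j)) hg0
      simp only [coeff_zero] at hco
      rw [hgdef, hFdef, finset_sum_coeff] at hco
      rw [Finset.sum_eq_single j] at hco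
      · simp only [C_0, sub_zero, zero_sub, coeff_C_mul] at hco
        rw [hkey, if_pos rfl, mul_one] at hco
        have h1 : ((-1 : ℝ)) ^ (d - j) ≠ 0 := pow_ne_zero _ (by norm_num)
        have h2 : ((d.choose j : ℝ)) ≠ 0 :=
          Nat.cast_ne_zero.mpr (Nat.choose_pos hj).ne'
        simpa [mul_eq_zero, h1, h2] using hco
      · intro b hb hbj
        rw [Finset.mem_range] at hb
        have hne : d - j ≠ d - b := by omega
        simp only [C_0, sub_zero, zero_sub, coeff_C_mul, hkey, if_neg hne,
          mul_zero]
      · intro hjj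
        exact absurd (Finset.mem_range.mpr (by omega)) hjj
    -- conclude l = 0
    funext i
    have hi := hLX (i : ℕ) (by omega)
    rw [hLapp] at hi
    rw [Finset.sum_eq_single i] at hi
    · simpa [coeff_X_pow] using hi
    · intro b _ hbi
      simp [coeff_X_pow, Fin.val_eq_val, hbi]
    · simp
  -- assemble the rank computation
  rw [← Matrix.rank_transpose A, Matrix.rank]
  rw [LinearMap.finrank_range_of_inj hinj]
  simp [Module.finrank_fin_fun]
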